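/- Let F be a finite field with q elements and let a ≥ 2 and n ≥ 2a be integers. Then the number of homogeneous polynomials f ∈ F[x,y] of degree n such that no polynomial g ∈ F[x,y] of positive degree satisfies g^a ∣ f equals q^{n−2a+1}(q^a − q)(q^a − 1). (This is the exact finite-field count over X = ℙ¹ of a-th-power-free binary forms; dividing by the total number q^{n+1} of homogeneous polynomials of degree n gives (1 − q^{1−a})(1 − q^{−a}) = 1/ζ_{ℙ¹}(a), the finite-field instance of Remark 1.8(vi) of the paper: the motivic probability of no m-multiple points is 1/ζ_X(binom(d+m−1,d)).) -/

import Mathlib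

open MvPolynomial Polynomial UniqueFactorizationMonoid

namespace PF14

open MvPolynomial Polynomial



variable {R : Type*} [CommRing R] {σ : Type*}

/-- the grading map: X i ↦ (X i) * T -/
noncomputable def theta : MvPolynomial σ R →ₐ[R] Polynomial (MvPolynomial σ R) :=
  MvPolynomial.aeval (fun i => Polynomial.C (MvPolynomial.X i) * Polynomial.X)

lemma theta_monomial (d : σ →₀ ℕ) (c : R) :
    theta (MvPolynomial.monomial d c) =
      Polynomial.C (MvPolynomial.monomial d c) * Polynomial.X ^ (d.degree) := by
  rw [theta, MvPolynomial.aeval_monomial]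
  have h1 : (Finsupp.prod d fun i e => (Polynomial.C (MvPolynomial.X i) * Polynomial.X) ^ e)
      = Polynomial.C (Finsupp.prod d fun i e => (MvPolynomial.X i (R := R)) ^ e)
        * Polynomial.X ^ (d.degree) := by
    rw [Finsupp.prod, Finsupp.prod, Finsupp.degree]
    simp_rw [mul_pow]
    rw [Finset.prod_mul_distrib, Finset.prod_pow_eq_pow_sum]
    congr 1
    rw [map_prod]
    congr 1
    ext i
    rw [map_pow]
  rw [h1]
  have halg : (algebraMap R (Polynomial (MvPolynomial σ R))) c = Polynomial.C (MvPolynomial.C c) := rfl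
  rw [halg, ← mul_assoc, ← map_mul, ← MvPolynomial.monomial_eq]

lemma theta_coeff (p : MvPolynomial σ R) (k : ℕ) :
    (theta p).coeff k = MvPolynomial.homogeneousComponent k p := by
  induction p using MvPolynomial.induction_on' with
  | monomial d c =>
    rw [theta_monomial, Polynomial.coeff_C_mul, Polynomial.coeff_X_pow,
      MvPolynomial.homogeneousComponent_of_mem (MvPolynomial.isHomogeneous_monomial c rfl)]
    by_cases h : d.degree = k <;> simp [h]
  | add p q hp hq =>
    rw [map_add, Polynomial.coeff_add, map_add, hp, hq]

lemma theta_of_isHomogeneous {p : MvPolynomial σ R} {m : ℕ} (hp : p.IsHomogeneous m) :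
    theta p = Polynomial.monomial m p := by
  ext k
  rw [theta_coeff, Polynomial.coeff_monomial,
    MvPolynomial.homogeneousComponent_of_mem ((MvPolynomial.mem_homogeneousSubmodule m p).2 hp)]
  by_cases h : k = m
  · simp [h]
  · rw [if_neg h, if_neg (Ne.symm h)]

lemma isHomogeneous_of_coeff (p : MvPolynomial σ R) (m : ℕ)
    (h : ∀ k, k ≠ m → MvPolynomial.homogeneousComponent k p = 0) :
    p.IsHomogeneous m := by
  by_cases hm : m ≤ p.totalDegree
  · have := MvPolynomial.sum_homogeneousComponent p
    rw [Finset.sum_eq_single m (fun k _ hk => h k hk) (by intro hmem; exact absurd (Finset.mem_range.2 (Nat.lt_succ_of_le hm)) hmem)] at this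
    rw [← this]
    exact MvPolynomial.homogeneousComponent_isHomogeneous m p
  · have hz : p = 0 := by
      have := MvPolynomial.sum_homogeneousComponent p
      rw [Finset.sum_eq_zero] at this
      · exact this.symm
      intro k hk
      exact h k (by rintro rfl; exact hm (Nat.lt_succ_iff.mp (Finset.mem_range.1 hk)))
    rw [hz]; exact MvPolynomial.isHomogeneous_zero _ _ _

/-- Divisors of nonzero homogeneous polynomials are homogeneous. -/
lemma isHomogeneous_of_dvd [IsDomain R] {f g : MvPolynomial σ R} {n : ℕ}
    (hf : f.IsHomogeneous n) (hf0 : f ≠ 0) (hdvd : g ∣ f) :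
    ∃ m, g.IsHomogeneous m := by
  obtain ⟨h, rfl⟩ := hdvd
  have hg0 : g ≠ 0 := fun h0 => hf0 (by rw [h0, zero_mul])
  have hh0 : h ≠ 0 := fun h0 => hf0 (by rw [h0, mul_zero])
  have htf : theta (g * h) = Polynomial.monomial n (g * h) := theta_of_isHomogeneous hf
  have htg0 : theta g ≠ 0 := by
    intro h0
    have : theta (g * h) = 0 := by rw [map_mul, h0, zero_mul]
    rw [htf] at this
    exact hf0 (by simpa using this)
  have hth0 : theta h ≠ 0 := by
    intro h0
    have : theta (g * h) = 0 := by rw [map_mul, h0, mul_zero]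
    rw [htf] at this
    exact hf0 (by simpa using this)
  have hdeg : (theta g).natDegree + (theta h).natDegree = n := by
    have := Polynomial.natDegree_mul htg0 hth0
    rw [← map_mul, htf, Polynomial.natDegree_monomial_eq n hf0] at this
    omega
  have htrail : (theta g).natTrailingDegree + (theta h).natTrailingDegree = n := by
    have := Polynomial.natTrailingDegree_mul htg0 hth0
    rw [← map_mul, htf, Polynomial.natTrailingDegree_monomial hf0] at this
    omega
  have hg1 : (theta g).natTrailingDegree = (theta g).natDegree := by
    have l1 := Polynomial.natTrailingDegree_le_natDegree (theta g)
    have l2 := Polynomial.natTrailingDegree_le_natDegree (theta h)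
    omega
  refine ⟨(theta g).natDegree, isHomogeneous_of_coeff g _ (fun k hk => ?_)⟩
  rw [← theta_coeff]
  rcases lt_or_gt_of_ne hk with h' | h'
  · exact Polynomial.coeff_eq_zero_of_lt_natTrailingDegree (by omega)
  · exact Polynomial.coeff_eq_zero_of_natDegree_lt h'



open MvPolynomial Polynomial



variable {R : Type*} [CommRing R]

lemma fin2_eq (d : Fin 2 →₀ ℕ) : d = Finsupp.single 0 (d 0) + Finsupp.single 1 (d 1) := by
  ext i
  fin_cases i <;> simp [Finsupp.single_apply]

lemma fin2_degree (d : Fin 2 →₀ ℕ) : d.degree = d 0 + d 1 := by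
  rw [Finsupp.degree_apply, Finset.sum_subset (Finset.subset_univ d.support)
    (by intro x _ hx; simpa using Finsupp.notMem_support_iff.mp hx), Fin.sum_univ_two]

noncomputable def phi : MvPolynomial (Fin 2) R →ₐ[R] Polynomial R :=
  MvPolynomial.aeval ![Polynomial.X, 1]

lemma phi_monomial (i j : ℕ) (c : R) :
    phi (MvPolynomial.monomial (Finsupp.single 0 i + Finsupp.single 1 j) c)
      = Polynomial.C c * Polynomial.X ^ i := by
  have : (MvPolynomial.monomial (R := R) (Finsupp.single (0 : Fin 2) i + Finsupp.single 1 j) c)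
      = MvPolynomial.C c * (MvPolynomial.X 0) ^ i * (MvPolynomial.X 1) ^ j := by
    rw [MvPolynomial.monomial_single_add]
    rw [show (Finsupp.single (1 : Fin 2) j) = Finsupp.single 1 j + 0 by simp]
    rw [MvPolynomial.monomial_single_add, MvPolynomial.monomial_zero' (R := R)]
    ring
  rw [this]
  simp only [phi, map_mul, map_pow, MvPolynomial.aeval_X, MvPolynomial.aeval_C]
  simp [Matrix.cons_val_one, Matrix.cons_val_zero, Polynomial.algebraMap_eq]

noncomputable def homf (m : ℕ) (P : Polynomial R) : MvPolynomial (Fin 2) R :=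
  ∑ i ∈ Finset.range (m+1),
    MvPolynomial.monomial (Finsupp.single 0 i + Finsupp.single 1 (m - i)) (P.coeff i)

lemma homf_isHomogeneous (m : ℕ) (P : Polynomial R) : (homf m P).IsHomogeneous m := by
  apply MvPolynomial.IsHomogeneous.sum
  intro i hi
  apply MvPolynomial.isHomogeneous_monomial
  rw [fin2_degree]
  simp only [Finsupp.add_apply, Finsupp.single_apply]
  simp only [Finset.mem_range] at hi
  norm_num
  omega

lemma phi_homf {m : ℕ} {P : Polynomial R} (h : P.natDegree ≤ m) : phi (homf m P) = P := by
  rw [homf, map_sum]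
  simp_rw [phi_monomial]
  simp_rw [Polynomial.C_mul_X_pow_eq_monomial]
  exact (Polynomial.as_sum_range' P (m+1) (Nat.lt_succ_of_le h)).symm

lemma homf_sum {m : ℕ} {ι : Type*} (s : Finset ι) (P : ι → Polynomial R) :
    homf m (∑ i ∈ s, P i) = ∑ i ∈ s, homf m (P i) := by
  simp only [homf, Polynomial.finset_sum_coeff]
  simp_rw [map_sum (MvPolynomial.monomial _)]
  exact Finset.sum_comm

lemma homf_monomial_of_degree {n : ℕ} (v : Fin 2 →₀ ℕ) (c : R) (hv : v.degree = n) :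
    homf n (phi (MvPolynomial.monomial v c)) = MvPolynomial.monomial v c := by
  have hd := fin2_degree v
  have he : v 0 ≤ n := by omega
  have hv1 : v 1 = n - v 0 := by omega
  have hrep : v = Finsupp.single 0 (v 0) + Finsupp.single 1 (n - v 0) := by
    rw [← hv1]; exact fin2_eq v
  rw [hrep, phi_monomial, homf]
  rw [Finset.sum_eq_single (v 0)]
  · rw [Polynomial.coeff_C_mul, Polynomial.coeff_X_pow, if_pos rfl, mul_one]
  · intro i _ hi
    rw [Polynomial.coeff_C_mul, Polynomial.coeff_X_pow, if_neg hi, mul_zero, map_zero]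
  · intro h
    exact absurd (Finset.mem_range.2 (Nat.lt_succ_of_le he)) h

lemma homf_phi {n : ℕ} {f : MvPolynomial (Fin 2) R} (hf : f.IsHomogeneous n) :
    homf n (phi f) = f := by
  conv_rhs => rw [MvPolynomial.as_sum f]
  conv_lhs => rw [MvPolynomial.as_sum f]
  rw [map_sum, homf_sum]
  apply Finset.sum_congr rfl
  intro v hv
  apply homf_monomial_of_degree
  by_contra hne
  exact (MvPolynomial.mem_support_iff.1 hv) (hf.coeff_eq_zero hne)

lemma phi_natDegree_le (p : MvPolynomial (Fin 2) R) :
    (phi p).natDegree ≤ p.totalDegree := by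
  conv_lhs => rw [MvPolynomial.as_sum p]
  rw [map_sum]
  apply Polynomial.natDegree_sum_le_of_forall_le
  intro v hv
  have h1 : v = Finsupp.single 0 (v 0) + Finsupp.single 1 (v 1) := fin2_eq v
  rw [h1, phi_monomial]
  apply le_trans (Polynomial.natDegree_C_mul_le _ _)
  apply le_trans (Polynomial.natDegree_X_pow_le _)
  have := MvPolynomial.le_totalDegree hv
  have hd : (v.sum fun _ e => e) = v.degree := by
    rw [Finsupp.degree_apply, Finsupp.sum]
  rw [hd, fin2_degree] at this
  omega



section Field
variable {K : Type*} [Field K]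

lemma homf_zero (m : ℕ) : homf m (0 : Polynomial K) = 0 := by simp [homf]

lemma homf_one (m : ℕ) : homf m (1 : Polynomial K) = (MvPolynomial.X 1) ^ m := by
  rw [homf, Finset.sum_eq_single 0]
  · simp [MvPolynomial.X_pow_eq_monomial]
  · intro i _ hi
    rw [Polynomial.coeff_one, if_neg (by omega), map_zero]
  · intro h; simp at h

lemma homf_ne_zero {m : ℕ} {P : Polynomial K} (hP : P.natDegree ≤ m) (h0 : P ≠ 0) :
    homf m P ≠ 0 := fun h => h0 (by rw [← phi_homf hP, h, map_zero])

lemma homf_mul {m k : ℕ} {P Q : Polynomial K} (hP : P.natDegree ≤ m) (hQ : Q.natDegree ≤ k) :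
    homf m P * homf k Q = homf (m + k) (P * Q) := by
  have h1 : (homf m P * homf k Q).IsHomogeneous (m + k) :=
    (homf_isHomogeneous m P).mul (homf_isHomogeneous k Q)
  have h2 := homf_phi h1
  rw [map_mul, phi_homf hP, phi_homf hQ] at h2
  exact h2.symm

lemma homf_pow {m : ℕ} {P : Polynomial K} (hP : P.natDegree ≤ m) (j : ℕ) :
    (homf m P) ^ j = homf (m * j) (P ^ j) := by
  induction j with
  | zero => simp [homf_one, pow_zero]
  | succ j ih =>
    rw [pow_succ, ih, homf_mul (le_trans (Polynomial.natDegree_pow_le)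
      (by rw [mul_comm]; exact Nat.mul_le_mul_right j hP)) hP, ← pow_succ, Nat.mul_succ]

/-- The key transfer lemma. -/
lemma key_equiv {n a : ℕ} (ha : 1 ≤ a) {f : MvPolynomial (Fin 2) K} (hf : f.IsHomogeneous n) :
    (¬∃ g : MvPolynomial (Fin 2) K, 0 < g.totalDegree ∧ g ^ a ∣ f) ↔
      (phi f ≠ 0 ∧ (¬∃ G : Polynomial K, 0 < G.natDegree ∧ G ^ a ∣ phi f) ∧
        n < (phi f).natDegree + a) := by
  constructor
  · intro hfree
    have hf0 : f ≠ 0 := by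
      rintro rfl
      exact hfree ⟨MvPolynomial.X 0, by simp [MvPolynomial.totalDegree_X], dvd_zero _⟩
    have hphi0 : phi f ≠ 0 := fun h =>
      hf0 (by rw [← homf_phi hf, h, homf_zero])
    set D := (phi f).natDegree with hDdef
    have hDn : D ≤ n := le_trans (phi_natDegree_le f) (le_of_eq (hf.totalDegree hf0))
    have hsplit : f = homf (n - D) 1 * homf D (phi f) := by
      rw [homf_mul (by simp) (le_refl D), one_mul, Nat.sub_add_cancel hDn, homf_phi hf]
    refine ⟨hphi0, ?_, ?_⟩
    · rintro ⟨G, hG, H, hH⟩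
      have hG0 : G ≠ 0 := fun h => by simp [h, zero_pow (by omega : a ≠ 0)] at hH; exact hphi0 hH
      have hH0 : H ≠ 0 := fun h => by rw [h, mul_zero] at hH; exact hphi0 hH
      set k := G.natDegree with hk
      have hdegs : D = a * k + H.natDegree := by
        rw [hDdef, hH, Polynomial.natDegree_mul (pow_ne_zero a hG0) hH0,
          Polynomial.natDegree_pow]
      have hc : k * a = a * k := Nat.mul_comm k a
      have hGa : (G ^ a).natDegree ≤ k * a := by rw [Polynomial.natDegree_pow, ← hk, mul_comm]
      have hHd : H.natDegree ≤ D - a * k := by omega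
      have h2 : homf D (phi f) = (homf k G) ^ a * homf (D - a * k) H := by
        rw [homf_pow (le_refl k) a, homf_mul hGa hHd, ← hH,
          show k * a + (D - a * k) = D by omega]
      apply hfree
      refine ⟨homf k G, ?_, ⟨homf (n - D) 1 * homf (D - a * k) H, ?_⟩⟩
      · have hne := homf_ne_zero (le_refl k) hG0
        rw [(homf_isHomogeneous k G).totalDegree hne]
        omega
      · rw [hsplit, h2]; ring
    · by_contra hcon
      push_neg at hcon
      apply hfree
      refine ⟨MvPolynomial.X 1, by simp [MvPolynomial.totalDegree_X], ?_⟩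
      rw [homf_one] at hsplit
      rw [hsplit, show n - D = a + (n - D - a) by omega, pow_add, mul_assoc]
      exact Dvd.intro _ rfl
  · rintro ⟨hphi0, hfreeP, hlt⟩ ⟨g, hg, hdvd⟩
    have hf0 : f ≠ 0 := fun h => hphi0 (by rw [h, map_zero])
    have hgf : g ∣ f := dvd_trans (dvd_pow_self g (by omega)) hdvd
    obtain ⟨m, hgh⟩ := isHomogeneous_of_dvd hf hf0 hgf
    have hg0 : g ≠ 0 := fun h => by simp [h] at hg
    have hm : m = g.totalDegree := (hgh.totalDegree hg0).symm
    have hmpos : 0 < m := hm ▸ hg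
    obtain ⟨h, hfh⟩ := hdvd
    have hh0 : h ≠ 0 := fun h0 => hf0 (by rw [hfh, h0, mul_zero])
    obtain ⟨l, hl⟩ := isHomogeneous_of_dvd (g := h) hf hf0 ⟨g ^ a, by rw [hfh]; ring⟩
    have hn : m * a + l = n := by
      refine MvPolynomial.IsHomogeneous.inj_right ?_ hf hf0
      rw [hfh]
      exact (hgh.pow a).mul hl
    have hphig0 : phi g ≠ 0 := fun h0 =>
      hg0 (by rw [← homf_phi hgh, h0, homf_zero])
    have hphih0 : phi h ≠ 0 := fun h0 =>
      hh0 (by rw [← homf_phi hl, h0, homf_zero])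
    have hphif : phi f = (phi g) ^ a * phi h := by rw [hfh, map_mul, map_pow]
    rcases Nat.eq_zero_or_pos (phi g).natDegree with hk0 | hkpos
    · have hD : (phi f).natDegree = (phi h).natDegree := by
        rw [hphif, Polynomial.natDegree_mul (pow_ne_zero a hphig0) hphih0,
          Polynomial.natDegree_pow, hk0, Nat.mul_zero, Nat.zero_add]
      have hDl : (phi f).natDegree ≤ l := by
        rw [hD]
        exact le_trans (phi_natDegree_le h) (le_of_eq (hl.totalDegree hh0))
      have ham : a ≤ m * a := Nat.le_mul_of_pos_left a hmpos
      omega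
    · exact hfreeP ⟨phi g, hkpos, ⟨phi h, hphif⟩⟩

end Field


variable {K : Type*} [Field K]

open UniqueFactorizationMonoid in
/-- `a`-th power free -/
def Afree (a : ℕ) (P : Polynomial K) : Prop :=
  ¬∃ G : Polynomial K, 0 < G.natDegree ∧ G ^ a ∣ P

lemma count_lt_of_afree [DecidableEq K] {a : ℕ} (ha : 0 < a) {S : Polynomial K} (hS : S ≠ 0)
    (h : Afree a S) (p : Polynomial K) : (normalizedFactors S).count p < a := by
  by_contra hc
  push_neg at hc
  have hp : p ∈ normalizedFactors S := by
    by_contra hmem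
    rw [Multiset.count_eq_zero_of_notMem hmem] at hc
    omega
  have hirr := irreducible_of_normalized_factor p hp
  have hdvd : p ^ a ∣ S := by
    have hle : Multiset.replicate a p ≤ normalizedFactors S :=
      Multiset.le_count_iff_replicate_le.mp hc
    have h2 := Multiset.prod_dvd_prod_of_le hle
    rw [Multiset.prod_replicate] at h2
    exact h2.trans (prod_normalizedFactors hS).dvd
  exact h ⟨p, hirr.natDegree_pos, hdvd⟩

lemma exists_decomp {a : ℕ} (ha : 1 ≤ a) :
    ∀ m : ℕ, ∀ P : Polynomial K, P.Monic → P.natDegree = m →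
      ∃ S G : Polynomial K, S.Monic ∧ Afree a S ∧ G.Monic ∧ P = S * G ^ a := by
  intro m
  induction m using Nat.strong_induction_on with
  | _ m ih =>
    intro P hP hdeg
    by_cases hfree : Afree a P
    · exact ⟨P, 1, hP, hfree, monic_one, by simp⟩
    · rw [Afree, not_not] at hfree
      obtain ⟨g, hg, hdvd⟩ := hfree
      have hg0 : g ≠ 0 := fun h => by simp [h] at hg
      set g' : Polynomial K := g * Polynomial.C g.leadingCoeff⁻¹ with hg'def
      have hg'monic : g'.Monic := monic_mul_leadingCoeff_inv hg0
      have hg'deg : g'.natDegree = g.natDegree := natDegree_mul_leadingCoeff_inv g hg0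
      have hassoc : Associated g' g := associated_mul_unit_left g _
        (Polynomial.isUnit_C.mpr (isUnit_iff_ne_zero.mpr
          (inv_ne_zero (Polynomial.leadingCoeff_ne_zero.mpr hg0))))
      have hg'dvd : g' ^ a ∣ P := (hassoc.pow_pow).dvd.trans hdvd
      obtain ⟨Q, hQ⟩ := hg'dvd
      have hQmonic : Q.Monic := ((hg'monic.pow a).of_mul_monic_left (hQ ▸ hP))
      have hdegQ : Q.natDegree < m := by
        have h1 : P.natDegree = a * g'.natDegree + Q.natDegree := by
          rw [hQ, Polynomial.natDegree_mul (pow_ne_zero a hg'monic.ne_zero) hQmonic.ne_zero,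
            Polynomial.natDegree_pow]
        have h2 : 0 < g'.natDegree := hg'deg ▸ hg
        have h3 : g'.natDegree ≤ a * g'.natDegree := Nat.le_mul_of_pos_left _ ha
        omega
      obtain ⟨S, G, hS, hfreeS, hG, hSG⟩ := ih Q.natDegree hdegQ Q hQmonic rfl
      exact ⟨S, g' * G, hS, hfreeS, hg'monic.mul hG, by rw [hQ, hSG]; ring⟩

lemma count_decomp [DecidableEq K] {a : ℕ} {S G : Polynomial K} (hS : S ≠ 0) (hG : G ≠ 0)
    (p : Polynomial K) :
    (normalizedFactors (S * G ^ a)).count p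
      = (normalizedFactors S).count p + a * (normalizedFactors G).count p := by
  rw [normalizedFactors_mul hS (pow_ne_zero a hG), normalizedFactors_pow,
    Multiset.count_add, Multiset.count_nsmul]

lemma decomp_unique {a : ℕ} (ha : 1 ≤ a) {S₁ S₂ G₁ G₂ : Polynomial K}
    (hS₁ : S₁.Monic) (hS₂ : S₂.Monic) (hG₁ : G₁.Monic) (hG₂ : G₂.Monic)
    (hf₁ : Afree a S₁) (hf₂ : Afree a S₂)
    (heq : S₁ * G₁ ^ a = S₂ * G₂ ^ a) : S₁ = S₂ ∧ G₁ = G₂ := by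
  classical
  have hcount : ∀ p : Polynomial K,
      (normalizedFactors G₁).count p = (normalizedFactors G₂).count p := by
    intro p
    have h1 := count_decomp (a := a) hS₁.ne_zero hG₁.ne_zero p
    have h2 := count_decomp (a := a) hS₂.ne_zero hG₂.ne_zero p
    rw [heq, h2] at h1
    have hc₁ := count_lt_of_afree (by omega) hS₁.ne_zero hf₁ p
    have hc₂ := count_lt_of_afree (by omega) hS₂.ne_zero hf₂ p
    set c₁ := (normalizedFactors S₁).count p
    set c₂ := (normalizedFactors S₂).count p
    set d₁ := (normalizedFactors G₁).count p
    set d₂ := (normalizedFactors G₂).count p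
    have e₁ : (c₁ + a * d₁) / a = d₁ := by
      rw [Nat.add_mul_div_left _ _ (by omega : 0 < a), Nat.div_eq_of_lt hc₁, Nat.zero_add]
    have e₂ : (c₂ + a * d₂) / a = d₂ := by
      rw [Nat.add_mul_div_left _ _ (by omega : 0 < a), Nat.div_eq_of_lt hc₂, Nat.zero_add]
    rw [← e₁, ← e₂, h1]
  have hGeq : G₁ = G₂ := by
    have hle₁ : G₁ ∣ G₂ := by
      rw [dvd_iff_normalizedFactors_le_normalizedFactors hG₁.ne_zero hG₂.ne_zero,
        Multiset.le_iff_count]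
      exact fun p => le_of_eq (hcount p)
    have hle₂ : G₂ ∣ G₁ := by
      rw [dvd_iff_normalizedFactors_le_normalizedFactors hG₂.ne_zero hG₁.ne_zero,
        Multiset.le_iff_count]
      exact fun p => ge_of_eq (hcount p)
    exact Polynomial.eq_of_monic_of_associated hG₁ hG₂ (associated_of_dvd_dvd hle₁ hle₂)
  refine ⟨?_, hGeq⟩
  rw [hGeq] at heq
  exact mul_right_cancel₀ (pow_ne_zero a hG₂.ne_zero) heq

variable (K) in
/-- monic polynomials of degree `d` -/
abbrev MonicOf (d : ℕ) : Type _ := {P : Polynomial K // P.Monic ∧ P.natDegree = d}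

variable (K) in
/-- monic `a`-th power free polynomials of degree `d` -/
abbrev AFree (a d : ℕ) : Type _ := {P : Polynomial K // (P.Monic ∧ P.natDegree = d) ∧ Afree a P}

noncomputable def monicOfEquivFun (d : ℕ) : MonicOf K d ≃ (Fin d → K) :=
  (Polynomial.monicEquivDegreeLT d).trans (Polynomial.degreeLTEquiv K d).toEquiv

instance (d : ℕ) [Finite K] : Finite (MonicOf K d) :=
  Finite.of_equiv _ (monicOfEquivFun (K := K) d).symm

instance (a d : ℕ) [Finite K] : Finite (AFree K a d) :=
  Finite.of_injective (fun x => (⟨x.1, x.2.1⟩ : MonicOf K d))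
    (fun x y h => Subtype.ext (Subtype.mk_eq_mk.mp h))

lemma card_monicOf [Fintype K] (d : ℕ) :
    Nat.card (MonicOf K d) = Fintype.card K ^ d := by
  rw [Nat.card_congr (monicOfEquivFun (K := K) d), Nat.card_fun, Nat.card_eq_fintype_card,
    Nat.card_eq_fintype_card, Fintype.card_fin]

noncomputable def decompEquiv {a : ℕ} (ha : 1 ≤ a) (m : ℕ) :
    (Σ k : Fin (m / a + 1), AFree K a (m - a * k) × MonicOf K k) ≃ MonicOf K m := by
  apply Equiv.ofBijective (fun x =>
    (⟨x.2.1.1 * x.2.2.1 ^ a, x.2.1.2.1.1.mul (x.2.2.2.1.pow a), by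
      have hk : (x.1 : ℕ) ≤ m / a := Nat.lt_succ_iff.mp x.1.isLt
      have hak : a * (x.1 : ℕ) ≤ m := by
        rw [Nat.mul_comm]
        exact (Nat.le_div_iff_mul_le (by omega : 0 < a)).mp hk
      rw [Polynomial.natDegree_mul (x.2.1.2.1.1.ne_zero) (pow_ne_zero a x.2.2.2.1.ne_zero),
        Polynomial.natDegree_pow, x.2.1.2.1.2, x.2.2.2.2]
      omega⟩ : MonicOf K m))
  constructor
  · rintro ⟨k₁, ⟨S₁, hS₁⟩, ⟨G₁, hG₁⟩⟩ ⟨k₂, ⟨S₂, hS₂⟩, ⟨G₂, hG₂⟩⟩ hxy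
    have hval : S₁ * G₁ ^ a = S₂ * G₂ ^ a := congrArg Subtype.val hxy
    obtain ⟨hSeq, hGeq⟩ := decomp_unique ha hS₁.1.1 hS₂.1.1 hG₁.1 hG₂.1 hS₁.2 hS₂.2 hval
    have hk : k₁ = k₂ := Fin.ext (by rw [← hG₁.2, ← hG₂.2, hGeq])
    subst hk
    exact congrArg _ (Prod.ext (Subtype.ext hSeq) (Subtype.ext hGeq))
  · rintro ⟨P, hP, hPdeg⟩
    obtain ⟨S, G, hS, hfreeS, hG, hSG⟩ := exists_decomp ha P.natDegree P hP rfl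
    have hdegs : P.natDegree = S.natDegree + a * G.natDegree := by
      rw [hSG, Polynomial.natDegree_mul hS.ne_zero (pow_ne_zero a hG.ne_zero),
        Polynomial.natDegree_pow]
    have hmc : G.natDegree * a = a * G.natDegree := Nat.mul_comm _ _
    have hk : G.natDegree ≤ m / a := by
      rw [Nat.le_div_iff_mul_le (by omega : 0 < a)]
      omega
    refine ⟨⟨⟨G.natDegree, Nat.lt_succ_of_le hk⟩, ⟨S, ⟨⟨hS, ?_⟩, hfreeS⟩⟩,
      ⟨G, hG, rfl⟩⟩, Subtype.ext hSG.symm⟩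
    simp only
    omega

lemma nat_card_sigma {k : ℕ} (γ : Fin k → Type*) [∀ i, Finite (γ i)] :
    Nat.card (Σ i, γ i) = ∑ i, Nat.card (γ i) := by
  letI := fun i => Fintype.ofFinite (γ i)
  simp only [Nat.card_eq_fintype_card]
  exact Fintype.card_sigma

lemma sum_identity [Fintype K] {a : ℕ} (ha : 1 ≤ a) (m : ℕ) :
    Fintype.card K ^ m
      = ∑ k ∈ Finset.range (m / a + 1),
          Nat.card (AFree K a (m - a * k)) * Fintype.card K ^ k := by
  rw [← card_monicOf m, ← Nat.card_congr (decompEquiv (K := K) ha m), nat_card_sigma]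
  rw [← Fin.sum_univ_eq_sum_range (fun k => Nat.card (AFree K a (m - a * k))
    * Fintype.card K ^ k) (m / a + 1)]
  apply Finset.sum_congr rfl
  intro i _
  rw [Nat.card_prod, card_monicOf]

lemma card_afree_add [Fintype K] {a d : ℕ} (ha : 1 ≤ a) (hd : a ≤ d) :
    Nat.card (AFree K a d) + Fintype.card K ^ (d - a + 1) = Fintype.card K ^ d := by
  have h1 := sum_identity (K := K) ha d
  have h2 := sum_identity (K := K) ha (d - a)
  have hK : d / a = (d - a) / a + 1 := Nat.div_eq_sub_div (by omega) hd
  rw [Finset.sum_range_succ'] at h1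
  simp only [Nat.mul_zero, Nat.sub_zero, pow_zero, mul_one] at h1
  have hterm : ∀ j ∈ Finset.range (d / a),
      Nat.card (AFree K a (d - a * (j + 1))) * Fintype.card K ^ (j + 1)
        = Fintype.card K * (Nat.card (AFree K a (d - a - a * j)) * Fintype.card K ^ j) := by
    intro j _
    have hmul : a * (j + 1) = a * j + a := Nat.mul_succ a j
    have hj : d - a * (j + 1) = d - a - a * j := by omega
    rw [hj, pow_succ]
    ring
  rw [Finset.sum_congr rfl hterm, ← Finset.mul_sum, hK, ← h2] at h1
  have hq : Fintype.card K * Fintype.card K ^ (d - a) = Fintype.card K ^ (d - a + 1) := by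
    rw [pow_succ, mul_comm]
  omega


section Final
variable {K : Type*} [Field K]

variable (K) in
/-- nonzero `a`-th power free polynomials of degree exactly `d` -/
abbrev NZA (a d : ℕ) : Type _ := {P : Polynomial K // P.natDegree = d ∧ P ≠ 0 ∧ Afree a P}

lemma dvd_mul_C_iff {c : K} (hc : c ≠ 0) (x P : Polynomial K) :
    x ∣ P * Polynomial.C c ↔ x ∣ P := by
  constructor
  · intro h
    have : P * Polynomial.C c * Polynomial.C c⁻¹ = P := by
      rw [mul_assoc, ← Polynomial.C_mul, mul_inv_cancel₀ hc, Polynomial.C_1, mul_one]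
    exact this ▸ h.mul_right _
  · exact fun h => h.mul_right _

lemma afree_mul_C_iff {c : K} (hc : c ≠ 0) (a : ℕ) (P : Polynomial K) :
    Afree a (P * Polynomial.C c) ↔ Afree a P := by
  unfold Afree
  constructor
  · intro h ⟨G, hG, hd⟩
    exact h ⟨G, hG, (dvd_mul_C_iff hc _ _).mpr hd⟩
  · intro h ⟨G, hG, hd⟩
    exact h ⟨G, hG, (dvd_mul_C_iff hc _ _).mp hd⟩

noncomputable def scaleEquiv (a d : ℕ) : NZA K a d ≃ {c : K // c ≠ 0} × AFree K a d where
  toFun P := ⟨⟨P.1.leadingCoeff, Polynomial.leadingCoeff_ne_zero.mpr P.2.2.1⟩,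
    ⟨P.1 * Polynomial.C P.1.leadingCoeff⁻¹,
      ⟨⟨Polynomial.monic_mul_leadingCoeff_inv P.2.2.1,
        by rw [Polynomial.natDegree_mul_leadingCoeff_inv _ P.2.2.1]; exact P.2.1⟩,
       (afree_mul_C_iff (inv_ne_zero (Polynomial.leadingCoeff_ne_zero.mpr P.2.2.1)) a
        P.1).mpr P.2.2.2⟩⟩⟩
  invFun x := ⟨x.2.1 * Polynomial.C x.1.1,
    ⟨by
      rw [Polynomial.natDegree_mul x.2.2.1.1.ne_zero
        (fun h => x.1.2 (by simpa using congrArg (Polynomial.coeff · 0) h)),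
        Polynomial.natDegree_C, Nat.add_zero]
      exact x.2.2.1.2,
     mul_ne_zero x.2.2.1.1.ne_zero
       (fun h => x.1.2 (by simpa using congrArg (Polynomial.coeff · 0) h)),
     (afree_mul_C_iff x.1.2 a _).mpr x.2.2.2⟩⟩
  left_inv P := by
    apply Subtype.ext
    simp only
    rw [mul_assoc, ← Polynomial.C_mul, inv_mul_cancel₀
      (Polynomial.leadingCoeff_ne_zero.mpr P.2.2.1), Polynomial.C_1, mul_one]
  right_inv x := by
    have hlc : (x.2.1 * Polynomial.C x.1.1).leadingCoeff = x.1.1 := by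
      rw [Polynomial.leadingCoeff_mul, Polynomial.leadingCoeff_C, x.2.2.1.1.leadingCoeff,
        one_mul]
    refine Prod.ext (Subtype.ext ?_) (Subtype.ext ?_)
    · exact hlc
    · simp only [hlc]
      rw [mul_assoc, ← Polynomial.C_mul, mul_inv_cancel₀ x.1.2, Polynomial.C_1, mul_one]

instance (a d : ℕ) [Finite K] : Finite (NZA K a d) :=
  Finite.of_equiv _ (scaleEquiv (K := K) a d).symm

lemma card_NZA [Fintype K] (a d : ℕ) :
    Nat.card (NZA K a d) = (Fintype.card K - 1) * Nat.card (AFree K a d) := by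
  rw [Nat.card_congr (scaleEquiv (K := K) a d), Nat.card_prod]
  congr 1
  rw [← Nat.card_congr (unitsEquivNeZero (G₀ := K)), Nat.card_units, Nat.card_eq_fintype_card]

noncomputable def stratEquiv {a n : ℕ} (ha : 1 ≤ a) (han : a ≤ n) :
    (Σ j : Fin a, NZA K a (n - a + 1 + j)) ≃
      {P : Polynomial K // P ≠ 0 ∧ Afree a P ∧ P.natDegree ≤ n ∧ n < P.natDegree + a} := by
  apply Equiv.ofBijective (fun x => ⟨x.2.1, x.2.2.2.1, x.2.2.2.2, by
    have h1 := x.2.2.1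
    have h2 : (x.1 : ℕ) < a := x.1.isLt
    omega, by
    have h1 := x.2.2.1
    have h2 : (x.1 : ℕ) < a := x.1.isLt
    omega⟩)
  constructor
  · rintro ⟨j₁, P₁, h₁⟩ ⟨j₂, P₂, h₂⟩ hxy
    have hval : P₁ = P₂ := congrArg Subtype.val hxy
    have hj : j₁ = j₂ := Fin.ext (by
      have e₁ := h₁.1
      have e₂ := h₂.1
      rw [hval] at e₁
      omega)
    subst hj
    exact congrArg _ (Subtype.ext hval)
  · rintro ⟨P, h0, hfree, hle, hlt⟩
    refine ⟨⟨⟨P.natDegree - (n - a + 1), by omega⟩, ⟨P, by simp only; omega, h0, hfree⟩⟩,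
      Subtype.ext rfl⟩

noncomputable def mainEquiv {a n : ℕ} (ha : 1 ≤ a) :
    {f : MvPolynomial (Fin 2) K // f.IsHomogeneous n ∧
        ¬∃ g : MvPolynomial (Fin 2) K, 0 < g.totalDegree ∧ g ^ a ∣ f} ≃
      {P : Polynomial K // P ≠ 0 ∧ Afree a P ∧ P.natDegree ≤ n ∧ n < P.natDegree + a} where
  toFun f := ⟨phi f.1, by
    obtain ⟨hhom, hfree⟩ := f.2
    obtain ⟨h0, hfp, hlt⟩ := (key_equiv ha hhom).mp hfree
    exact ⟨h0, hfp, le_trans (phi_natDegree_le _) hhom.totalDegree_le, hlt⟩⟩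
  invFun P := ⟨homf n P.1, homf_isHomogeneous n P.1, by
    obtain ⟨h0, hfree, hle, hlt⟩ := P.2
    apply (key_equiv ha (homf_isHomogeneous n P.1)).mpr
    rw [phi_homf hle]
    exact ⟨h0, hfree, hlt⟩⟩
  left_inv f := Subtype.ext (homf_phi f.2.1)
  right_inv P := Subtype.ext (phi_homf P.2.2.2.1)

end Final
end PF14

/-- The number of `a`-th-power-free homogeneous polynomials of degree `n ≥ 2a` in
`𝔽_q[x,y]` (no `g` of positive degree has `g^a ∣ f`) equals
`q^{n−2a+1}(q^a − q)(q^a − 1)` — the exact finite-field count over `X = ℙ¹`, the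
finite-field instance of Remark 1.8(vi) of the paper. -/
theorem stmt14 (F : Type*) [Field F] [Fintype F] (q : ℕ) (hq : Fintype.card F = q)
    (a n : ℕ) (ha : 2 ≤ a) (hn : 2 * a ≤ n) :
    Nat.card {f : MvPolynomial (Fin 2) F // f.IsHomogeneous n ∧
        ¬ ∃ g : MvPolynomial (Fin 2) F, 0 < g.totalDegree ∧ g ^ a ∣ f}
      = q ^ (n - 2 * a + 1) * (q ^ a - q) * (q ^ a - 1) := by
  classical
  subst hq
  set q := Fintype.card F with hqdef
  have ha1 : 1 ≤ a := by omega
  have han : a ≤ n := by omega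
  have hq1 : 1 ≤ q := Fintype.card_pos
  -- reduce to the univariate count
  have hstep1 : Nat.card {f : MvPolynomial (Fin 2) F // f.IsHomogeneous n ∧
      ¬ ∃ g : MvPolynomial (Fin 2) F, 0 < g.totalDegree ∧ g ^ a ∣ f}
      = ∑ j ∈ Finset.range a, (q - 1) * Nat.card (PF14.AFree F a (n - a + 1 + j)) := by
    rw [Nat.card_congr (PF14.mainEquiv (K := F) ha1),
      ← Nat.card_congr (PF14.stratEquiv (K := F) ha1 han),
      PF14.nat_card_sigma,
      Fin.sum_univ_eq_sum_range (fun j => Nat.card (PF14.NZA F a (n - a + 1 + j))) a]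
    apply Finset.sum_congr rfl
    intro j _
    rw [PF14.card_NZA]
  have h1q : q ≤ q ^ a := Nat.le_self_pow (by omega) q
  have h2q : 1 ≤ q ^ a := Nat.one_le_pow a q (by omega)
  set e := n - 2 * a + 1 with hedef
  have hNj : ∀ j, j < a → (Nat.card (PF14.AFree F a (n - a + 1 + j)) : ℤ)
      = (q : ℤ) ^ (e + a + j) - (q : ℤ) ^ (e + 1 + j) := by
    intro j hj
    have hd : a ≤ n - a + 1 + j := by omega
    have h := PF14.card_afree_add (K := F) ha1 hd
    have he1 : n - a + 1 + j - a + 1 = e + 1 + j := by omega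
    have he2 : n - a + 1 + j = e + a + j := by omega
    rw [he1, he2] at h
    have hcast := congrArg (Nat.cast (R := ℤ)) h
    push_cast at hcast
    rw [he2, ← hqdef] at *
    linarith
  have step2 : (Nat.card {f : MvPolynomial (Fin 2) F // f.IsHomogeneous n ∧
      ¬ ∃ g : MvPolynomial (Fin 2) F, 0 < g.totalDegree ∧ g ^ a ∣ f} : ℤ)
      = ∑ j ∈ Finset.range a, ((q : ℤ) - 1) * ((q : ℤ) ^ (e + a + j) - (q : ℤ) ^ (e + 1 + j)) := by
    rw [hstep1]
    push_cast [Nat.cast_sub hq1]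
    apply Finset.sum_congr rfl
    intro j hj
    rw [hNj j (Finset.mem_range.mp hj)]
  have step3 : ∑ j ∈ Finset.range a, ((q : ℤ) - 1) * ((q : ℤ) ^ (e + a + j) - (q : ℤ) ^ (e + 1 + j))
      = (q : ℤ) ^ e * ((q : ℤ) ^ a - q) * ((q : ℤ) ^ a - 1) := by
    have hterm : ∀ j ∈ Finset.range a, ((q : ℤ) - 1) * ((q : ℤ) ^ (e + a + j) - (q : ℤ) ^ (e + 1 + j))
        = ((q : ℤ) ^ e * ((q : ℤ) ^ a - q)) * ((q : ℤ) ^ j * ((q : ℤ) - 1)) := by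
      intro j _
      simp only [pow_add]
      ring
    rw [Finset.sum_congr rfl hterm, ← Finset.mul_sum, ← Finset.sum_mul, geom_sum_mul]
  have hfin : (Nat.card {f : MvPolynomial (Fin 2) F // f.IsHomogeneous n ∧
      ¬ ∃ g : MvPolynomial (Fin 2) F, 0 < g.totalDegree ∧ g ^ a ∣ f} : ℤ)
      = ((q ^ e * (q ^ a - q) * (q ^ a - 1) : ℕ) : ℤ) := by
    rw [step2, step3]
    push_cast [Nat.cast_sub h1q, Nat.cast_sub h2q]
    ring
  exact Nat.cast_injective hfin
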